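/- arXiv:1612.00869 — 7 statements merged into one kernel-verified Lean document; each statement's English description precedes it below -/
import Mathlib

section
/- Let Q be a compact Hausdorff space, X = C(Q,ℝ), K the cone of nonnegative functions, and L : X → X a bounded linear map with L(K) ⊆ K. If there exists v ∈ K, v ≠ 0, and a real number α such that (Lv)(t) ≥ α v(t) for all t ∈ Q, then the spectral radius of L satisfies r(L) ≥ α. -/
/-- If `L` is a positive bounded linear operator on `C(Q,ℝ)` (Q compact Hausdorff),
`v ∈ K`, `v ≠ 0`, and `L v ≥ α v` pointwise, then the spectral radius
`r(L) = lim ‖L^n‖^{1/n}` satisfies `r(L) ≥ α`. -/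
theorem stmt_1 {Q : Type*} [TopologicalSpace Q] [CompactSpace Q] [T2Space Q]
    (L : C(Q, ℝ) →L[ℝ] C(Q, ℝ))
    (hL : ∀ f : C(Q, ℝ), (∀ t, 0 ≤ f t) → ∀ t, 0 ≤ (L f) t)
    (v : C(Q, ℝ)) (hv : ∀ t, 0 ≤ v t) (hv0 : v ≠ 0)
    (α : ℝ) (hα : ∀ t, α * v t ≤ (L v) t)
    (r : ℝ)
    (hr : Filter.Tendsto (fun n : ℕ => ‖L ^ n‖ ^ ((1 : ℝ) / n)) Filter.atTop (nhds r)) :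
    α ≤ r := by
  have hr0 : 0 ≤ r := by
    refine ge_of_tendsto' hr fun n => ?_
    exact Real.rpow_nonneg (norm_nonneg (L ^ n)) _
  rcases le_or_gt α 0 with hneg | hpos
  · linarith
  -- main induction: α^n * v t ≤ (L^n v) t
  have key : ∀ n : ℕ, ∀ t, α ^ n * v t ≤ ((L ^ n) v) t := by
    intro n
    induction n with
    | zero => intro t; simp
    | succ n ih =>
      intro t
      have hdiff : ∀ s, 0 ≤ ((L ^ n) v - α ^ n • v) s := by
        intro s
        simpa [sub_nonneg] using ih s
      have h1 := hL _ hdiff t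
      have h2 : L ((L ^ n) v - α ^ n • v) = L ((L ^ n) v) - α ^ n • (L v) := by
        simp [map_sub, map_smul]
      rw [h2] at h1
      simp only [ContinuousMap.sub_apply, ContinuousMap.smul_apply, smul_eq_mul,
        sub_nonneg] at h1
      have h3 : α ^ n * (α * v t) ≤ α ^ n * (L v) t :=
        mul_le_mul_of_nonneg_left (hα t) (pow_nonneg hpos.le n)
      have h4 : L ^ (n + 1) = L * L ^ n := (pow_succ' L n)
      calc α ^ (n + 1) * v t = α ^ n * (α * v t) := by ring
        _ ≤ α ^ n * (L v) t := h3
        _ ≤ (L ((L ^ n) v)) t := h1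
        _ = ((L ^ (n + 1)) v) t := by rw [h4]; rfl
  have hvnorm : 0 < ‖v‖ := norm_pos_iff.mpr hv0
  have hnorm : ∀ n : ℕ, α ^ n ≤ ‖L ^ n‖ := by
    intro n
    have hb : ‖α ^ n • v‖ ≤ ‖(L ^ n) v‖ := by
      apply ContinuousMap.norm_le _ (norm_nonneg _) |>.mpr
      intro t
      have h1 : α ^ n * v t ≤ ((L ^ n) v) t := key n t
      have h2 : ((L ^ n) v) t ≤ ‖(L ^ n) v‖ :=
        le_trans (le_abs_self _) (((L ^ n) v).norm_coe_le_norm t)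
      have h3 : 0 ≤ α ^ n * v t := mul_nonneg (pow_nonneg hpos.le n) (hv t)
      simp only [ContinuousMap.smul_apply, smul_eq_mul, Real.norm_eq_abs]
      rw [abs_of_nonneg h3]
      linarith
    have hb2 : α ^ n * ‖v‖ ≤ ‖L ^ n‖ * ‖v‖ := by
      have hs : ‖α ^ n • v‖ = α ^ n * ‖v‖ := by
        rw [norm_smul (α ^ n) v, Real.norm_eq_abs, abs_of_nonneg (pow_nonneg hpos.le n)]
      calc α ^ n * ‖v‖ = ‖α ^ n • v‖ := hs.symm
        _ ≤ ‖(L ^ n) v‖ := hb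
        _ ≤ ‖L ^ n‖ * ‖v‖ := (L ^ n).le_opNorm v
    exact le_of_mul_le_mul_right hb2 hvnorm
  refine ge_of_tendsto hr ?_
  filter_upwards [Filter.eventually_ge_atTop 1] with n hn
  have hn0 : (n : ℝ) ≠ 0 := Nat.cast_ne_zero.mpr (by omega)
  have h1 : α = (α ^ n) ^ ((1 : ℝ) / n) := by
    rw [← Real.rpow_natCast α n, ← Real.rpow_mul hpos.le]
    rw [mul_one_div, div_self hn0, Real.rpow_one]
  rw [h1]
  exact Real.rpow_le_rpow (pow_nonneg hpos.le n) (hnorm n) (by positivity)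
end

section
/- If M is an n × n real matrix with nonnegative entries, v ∈ ℝⁿ has all entries strictly positive, and Mv ≤ λv coordinatewise for some real λ, then the spectral radius of M is at most λ. Analogously, if v has all nonnegative entries with v ≠ 0 and Mv ≥ αv coordinatewise, then the spectral radius of M is at least α. -/
open Matrix Finset Filter Topology
open scoped ENNReal NNReal

attribute [local instance] Matrix.linftyOpNormedRing Matrix.linftyOpNormedAlgebra

private lemma map_ofReal_pow {n : ℕ} (M : Matrix (Fin n) (Fin n) ℝ) (k : ℕ) :
    (M.map Complex.ofReal) ^ k = (M ^ k).map Complex.ofReal := by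
  induction k with
  | zero =>
    ext i j
    simp [Matrix.map_apply, Matrix.one_apply, apply_ite Complex.ofReal]
  | succ k ih =>
    rw [pow_succ, pow_succ, ih]
    ext i j
    simp only [Matrix.mul_apply, Matrix.map_apply]
    push_cast
    rfl

/-- For a nonnegative square real matrix `M`: if `v > 0` entrywise and `M v ≤ λ v`
coordinatewise then the spectral radius (sup of moduli of complex eigenvalues) is `≤ λ`;
if `v ≥ 0`, `v ≠ 0` and `M v ≥ α v` coordinatewise then the spectral radius is `≥ α`. -/
theorem stmt_2 {n : ℕ} (M : Matrix (Fin n) (Fin n) ℝ) (hM : ∀ i j, 0 ≤ M i j) :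
    (∀ (v : Fin n → ℝ) (lam : ℝ), (∀ i, 0 < v i) →
      (∀ i, M.mulVec v i ≤ lam * v i) →
      spectralRadius ℂ (M.map (Complex.ofReal)) ≤ ENNReal.ofReal lam) ∧
    (∀ (v : Fin n → ℝ) (α : ℝ), (∀ i, 0 ≤ v i) → v ≠ 0 →
      (∀ i, α * v i ≤ M.mulVec v i) →
      ENNReal.ofReal α ≤ spectralRadius ℂ (M.map (Complex.ofReal))) := by
  constructor
  · -- upper bound
    intro v lam hv hle
    refine iSup₂_le fun μ hμ => ?_
    rw [spectrum.mem_iff] at hμ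
    have hdet : (algebraMap ℂ (Matrix (Fin n) (Fin n) ℂ) μ - M.map Complex.ofReal).det = 0 := by
      by_contra h
      exact hμ ((Matrix.isUnit_iff_isUnit_det _).2 (Ne.isUnit h))
    obtain ⟨x, hx0, hx⟩ := (Matrix.exists_mulVec_eq_zero_iff).2 hdet
    have heig : ∀ i, (M.map Complex.ofReal).mulVec x i = μ * x i := by
      intro i
      have := congrFun hx i
      simp only [Matrix.sub_mulVec, Pi.sub_apply, Pi.zero_apply, sub_eq_zero] at this
      have halg : (algebraMap ℂ (Matrix (Fin n) (Fin n) ℂ) μ).mulVec x = μ • x := by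
        rw [Algebra.algebraMap_eq_smul_one, Matrix.smul_mulVec, Matrix.one_mulVec]
      rw [← this, halg]; rfl
    obtain ⟨i1, hi1⟩ : ∃ i, x i ≠ 0 := by
      by_contra h
      push_neg at h
      exact hx0 (funext h)
    haveI : Nonempty (Fin n) := ⟨i1⟩
    obtain ⟨i0, -, hmax⟩ := Finset.exists_max_image univ (fun i => ‖x i‖ / v i) univ_nonempty
    set c : ℝ := ‖x i0‖ / v i0 with hc
    have hcpos : 0 < c := lt_of_lt_of_le (div_pos (norm_pos_iff.2 hi1) (hv i1))
      (hmax i1 (mem_univ _))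
    have hxle : ∀ j, ‖x j‖ ≤ c * v j := fun j =>
      (div_le_iff₀ (hv j)).1 (hmax j (mem_univ _))
    have hxi0 : ‖x i0‖ = c * v i0 := (div_mul_cancel₀ ‖x i0‖ (hv i0).ne').symm
    have key : ‖μ‖ * ‖x i0‖ ≤ lam * ‖x i0‖ := by
      calc ‖μ‖ * ‖x i0‖ = ‖μ * x i0‖ := (norm_mul _ _).symm
        _ = ‖(M.map Complex.ofReal).mulVec x i0‖ := by rw [heig]
        _ = ‖∑ j, (M i0 j : ℂ) * x j‖ := by
            simp [Matrix.mulVec, dotProduct, Matrix.map_apply]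
        _ ≤ ∑ j, ‖(M i0 j : ℂ) * x j‖ := norm_sum_le _ _
        _ = ∑ j, M i0 j * ‖x j‖ := by
            refine Finset.sum_congr rfl fun j _ => ?_
            rw [norm_mul, Complex.norm_real, Real.norm_of_nonneg (hM i0 j)]
        _ ≤ ∑ j, M i0 j * (c * v j) := by
            refine Finset.sum_le_sum fun j _ => ?_
            exact mul_le_mul_of_nonneg_left (hxle j) (hM i0 j)
        _ = c * M.mulVec v i0 := by
            simp only [Matrix.mulVec, dotProduct, Finset.mul_sum]
            exact Finset.sum_congr rfl fun j _ => by ring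
        _ ≤ c * (lam * v i0) := mul_le_mul_of_nonneg_left (hle i0) hcpos.le
        _ = lam * ‖x i0‖ := by rw [hxi0]; ring
    have hxi0pos : 0 < ‖x i0‖ := by rw [hxi0]; exact mul_pos hcpos (hv i0)
    have hμlam : ‖μ‖ ≤ lam := le_of_mul_le_mul_right key hxi0pos
    calc (‖μ‖₊ : ℝ≥0∞) = ENNReal.ofReal ‖μ‖ := by rw [← enorm_eq_nnnorm, ofReal_norm]
      _ ≤ ENNReal.ofReal lam := ENNReal.ofReal_le_ofReal hμlam
  · -- lower bound
    intro v α hv hv0 hge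
    rcases le_or_gt α 0 with hα | hα
    · simp [ENNReal.ofReal_eq_zero.2 hα]
    obtain ⟨i1, hi1⟩ : ∃ i, v i ≠ 0 := Function.ne_iff.1 hv0
    haveI : Nonempty (Fin n) := ⟨i1⟩
    obtain ⟨jm, -, hjm⟩ := Finset.exists_max_image univ v univ_nonempty
    have hvjm : 0 < v jm :=
      lt_of_lt_of_le ((hv i1).lt_of_ne (Ne.symm hi1)) (hjm i1 (mem_univ _))
    -- key induction
    have key : ∀ k : ℕ, ∀ i, α ^ k * v i ≤ (M ^ k).mulVec v i := by
      intro k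
      induction k with
      | zero => intro i; simp [Matrix.one_mulVec]
      | succ k ih =>
        intro i
        have h1 : (M ^ (k + 1)).mulVec v i = M.mulVec ((M ^ k).mulVec v) i := by
          rw [pow_succ', ← Matrix.mulVec_mulVec]
        rw [h1]
        have h2 : α ^ k * M.mulVec v i ≤ M.mulVec ((M ^ k).mulVec v) i := by
          simp only [Matrix.mulVec, dotProduct, Finset.mul_sum]
          refine Finset.sum_le_sum fun j _ => ?_
          have := mul_le_mul_of_nonneg_left (ih j) (hM i j)
          calc α ^ k * (M i j * v j) = M i j * (α ^ k * v j) := by ring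
            _ ≤ M i j * (M ^ k).mulVec v j := this
            _ = ∑ l, M i j * ((M ^ k) j l * v l) := by
                simp only [Matrix.mulVec, dotProduct, Finset.mul_sum]
        calc α ^ (k + 1) * v i = α ^ k * (α * v i) := by ring
          _ ≤ α ^ k * M.mulVec v i :=
              mul_le_mul_of_nonneg_left (hge i) (pow_nonneg hα.le k)
          _ ≤ _ := h2
    -- norm lower bound
    set A := M.map Complex.ofReal with hA
    have hnorm : ∀ k : ℕ, α ^ k ≤ ‖A ^ k‖ := by
      intro k
      set w : Fin n → ℂ := fun i => (v i : ℂ) with hw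
      have hAw : (A ^ k).mulVec w = fun i => ((M ^ k).mulVec v i : ℂ) := by
        funext i
        rw [hA, map_ofReal_pow]
        simp [Matrix.mulVec, dotProduct, Matrix.map_apply, hw]
      have hwnorm : ‖w‖ ≤ v jm := by
        rw [pi_norm_le_iff_of_nonneg hvjm.le]
        intro i
        rw [hw]
        simp only [Complex.norm_real, Real.norm_of_nonneg (hv i)]
        exact hjm i (mem_univ _)
      have h1 : α ^ k * v jm ≤ (M ^ k).mulVec v jm := key k jm
      have h2 : (M ^ k).mulVec v jm ≤ ‖A ^ k‖ * v jm := by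
        calc (M ^ k).mulVec v jm ≤ ‖((M ^ k).mulVec v jm : ℂ)‖ := by
              rw [Complex.norm_real]; exact le_abs_self _
          _ = ‖(A ^ k).mulVec w jm‖ := by rw [hAw]
          _ ≤ ‖(A ^ k).mulVec w‖ := norm_le_pi_norm _ jm
          _ ≤ ‖A ^ k‖ * ‖w‖ := Matrix.linfty_opNorm_mulVec _ _
          _ ≤ ‖A ^ k‖ * v jm := by
              exact mul_le_mul_of_nonneg_left hwnorm (norm_nonneg _)
      exact le_of_mul_le_mul_right (h1.trans h2) hvjm
    -- Gelfand
    haveI : CompleteSpace (Matrix (Fin n) (Fin n) ℂ) := FiniteDimensional.complete ℂ _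
    have hG := spectrum.pow_nnnorm_pow_one_div_tendsto_nhds_spectralRadius A
    refine ge_of_tendsto hG ?_
    filter_upwards [eventually_ge_atTop 1] with k hk
    have hk' : (k : ℝ) ≠ 0 := Nat.cast_ne_zero.2 (by omega)
    have step : ENNReal.ofReal (α ^ k) ≤ (‖A ^ k‖₊ : ℝ≥0∞) := by
      rw [← enorm_eq_nnnorm, ← ofReal_norm]
      exact ENNReal.ofReal_le_ofReal (hnorm k)
    calc ENNReal.ofReal α = (ENNReal.ofReal α ^ k) ^ (1 / (k : ℝ)) := by
          rw [← ENNReal.rpow_natCast, ← ENNReal.rpow_mul, mul_one_div,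
            div_self hk', ENNReal.rpow_one]
      _ = (ENNReal.ofReal (α ^ k)) ^ (1 / (k : ℝ)) := by
          rw [ENNReal.ofReal_pow hα.le]
      _ ≤ (‖A ^ k‖₊ : ℝ≥0∞) ^ (1 / (k : ℝ)) :=
          ENNReal.rpow_le_rpow step (by positivity)
end

section
/- Let Q be a compact Hausdorff space, X = C(Q,ℝ), K the nonnegative cone, and let L₁, L₂ : X → X be bounded linear maps with Lⱼ(K) ⊆ K for j = 1,2 and L₁(f) ≤ L₂(f) pointwise for all f ∈ K. Then r(L₁) ≤ r(L₂). -/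
/-- If `L₁, L₂` are positive bounded linear operators on `C(Q,ℝ)` with `L₁ f ≤ L₂ f`
pointwise for all `f ≥ 0`, then `r(L₁) ≤ r(L₂)`, where `r(L) = lim ‖L^n‖^{1/n}`. -/
theorem stmt_3 {Q : Type*} [TopologicalSpace Q] [CompactSpace Q] [T2Space Q]
    (L₁ L₂ : C(Q, ℝ) →L[ℝ] C(Q, ℝ))
    (hL₁ : ∀ f : C(Q, ℝ), (∀ t, 0 ≤ f t) → ∀ t, 0 ≤ (L₁ f) t)
    (hL₂ : ∀ f : C(Q, ℝ), (∀ t, 0 ≤ f t) → ∀ t, 0 ≤ (L₂ f) t)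
    (hle : ∀ f : C(Q, ℝ), (∀ t, 0 ≤ f t) → ∀ t, (L₁ f) t ≤ (L₂ f) t)
    (r₁ r₂ : ℝ)
    (hr₁ : Filter.Tendsto (fun n : ℕ => ‖L₁ ^ n‖ ^ ((1 : ℝ) / n)) Filter.atTop (nhds r₁))
    (hr₂ : Filter.Tendsto (fun n : ℕ => ‖L₂ ^ n‖ ^ ((1 : ℝ) / n)) Filter.atTop (nhds r₂)) :
    r₁ ≤ r₂ := by
  -- Key: for f ≥ 0, L₁^n f ≥ 0, L₂^n f ≥ 0, and L₁^n f ≤ L₂^n f pointwise.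
  have key : ∀ n : ℕ, ∀ f : C(Q, ℝ), (∀ t, 0 ≤ f t) →
      (∀ t, 0 ≤ ((L₁ ^ n) f) t) ∧ (∀ t, 0 ≤ ((L₂ ^ n) f) t) ∧
      (∀ t, ((L₁ ^ n) f) t ≤ ((L₂ ^ n) f) t) := by
    intro n
    induction n with
    | zero => intro f hf; simp [hf, le_refl]
    | succ n ih =>
      intro f hf
      obtain ⟨h1, h2, h3⟩ := ih f hf
      have e1 : (L₁ ^ (n + 1)) f = L₁ ((L₁ ^ n) f) := by
        rw [pow_succ']; rfl
      have e2 : (L₂ ^ (n + 1)) f = L₂ ((L₂ ^ n) f) := by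
        rw [pow_succ']; rfl
      refine ⟨?_, ?_, ?_⟩
      · intro t; rw [e1]; exact hL₁ _ h1 t
      · intro t; rw [e2]; exact hL₂ _ h2 t
      · intro t
        rw [e1, e2]
        have hmono : (L₁ ((L₁ ^ n) f)) t ≤ (L₁ ((L₂ ^ n) f)) t := by
          have hd : ∀ s, 0 ≤ ((L₂ ^ n) f - (L₁ ^ n) f) s := by
            intro s; simpa using sub_nonneg.mpr (h3 s)
          have := hL₁ _ hd t
          rw [map_sub] at this
          have : 0 ≤ (L₁ ((L₂ ^ n) f)) t - (L₁ ((L₁ ^ n) f)) t := by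
            simpa using this
          linarith
        exact hmono.trans (hle _ h2 t)
  -- Norm comparison: ‖L₁^n‖ ≤ ‖L₂^n‖
  have hn : ∀ n : ℕ, ‖L₁ ^ n‖ ≤ ‖L₂ ^ n‖ := by
    intro n
    apply ContinuousLinearMap.opNorm_le_bound _ (ContinuousLinearMap.opNorm_nonneg _)
    intro f
    have habs : ∀ t, (0 : ℝ) ≤ |f| t := fun t => by simp [abs_nonneg]
    obtain ⟨ha1, ha2, ha3⟩ := key n |f| habs
    -- |(L₁^n f) t| ≤ (L₁^n |f|) t
    have hub : ∀ t, ((L₁ ^ n) f) t ≤ ((L₁ ^ n) |f|) t := by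
      intro t
      have hd : ∀ s, 0 ≤ (|f| - f) s := by
        intro s; simp [sub_nonneg, le_abs_self]
      have := (key n (|f| - f) hd).1 t
      rw [map_sub] at this
      have : 0 ≤ ((L₁ ^ n) |f|) t - ((L₁ ^ n) f) t := by simpa using this
      linarith
    have hlb : ∀ t, -(((L₁ ^ n) |f|) t) ≤ ((L₁ ^ n) f) t := by
      intro t
      have hd : ∀ s, 0 ≤ (|f| + f) s := by
        intro s
        simp only [ContinuousMap.add_apply, ContinuousMap.abs_apply]
        linarith [neg_abs_le (f s)]
      have := (key n (|f| + f) hd).1 t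
      rw [map_add] at this
      have : 0 ≤ ((L₁ ^ n) |f|) t + ((L₁ ^ n) f) t := by simpa using this
      linarith
    have hnormabs : ‖(|f| : C(Q, ℝ))‖ = ‖f‖ := by
      apply le_antisymm
      · apply ContinuousMap.norm_le _ (norm_nonneg f) |>.mpr
        intro t
        have := ContinuousMap.norm_coe_le_norm f t
        simpa [Real.norm_eq_abs, abs_abs] using this
      · apply ContinuousMap.norm_le _ (norm_nonneg _) |>.mpr
        intro t
        have := ContinuousMap.norm_coe_le_norm (|f| : C(Q, ℝ)) t
        simpa [Real.norm_eq_abs, abs_abs] using this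
    apply ContinuousMap.norm_le _ (by positivity) |>.mpr
    intro t
    rw [Real.norm_eq_abs, abs_le]
    have hbd : ((L₂ ^ n) |f|) t ≤ ‖L₂ ^ n‖ * ‖f‖ := by
      have h1 := ContinuousMap.norm_coe_le_norm ((L₂ ^ n) |f|) t
      have h2 := ((L₂ ^ n)).le_opNorm |f|
      rw [hnormabs] at h2
      calc ((L₂ ^ n) |f|) t ≤ |((L₂ ^ n) |f|) t| := le_abs_self _
        _ ≤ ‖(L₂ ^ n) |f|‖ := by simpa [Real.norm_eq_abs] using h1
        _ ≤ ‖L₂ ^ n‖ * ‖f‖ := h2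
    constructor
    · have := hlb t
      have h3 := (ha3 t)
      linarith
    · exact ((hub t).trans (ha3 t)).trans hbd
  -- Conclude by taking limits
  have h : ∀ n : ℕ, ‖L₁ ^ n‖ ^ ((1 : ℝ) / n) ≤ ‖L₂ ^ n‖ ^ ((1 : ℝ) / n) := by
    intro n
    exact Real.rpow_le_rpow (ContinuousLinearMap.opNorm_nonneg _) (hn n) (by positivity)
  exact le_of_tendsto_of_tendsto' hr₁ hr₂ h
end

section
/- Let b₁, b₂ be complex numbers with Re(bⱼ) ≥ γ ≥ 1 for j = 1,2, and define ψⱼ(z) = 1/(z + bⱼ) and θ = ψ₁ ∘ ψ₂. Then for all complex z, w with Re(z) ≥ 0 and Re(w) ≥ 0, |θ(z) − θ(w)| ≤ (γ² + 1)⁻² · |z − w|. -/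
lemma key_aux (γ : ℝ) (hγ : 1 ≤ γ) (b u : ℂ) (hb : γ ≤ b.re) (hu : γ ≤ u.re) :
    γ ^ 2 + 1 ≤ ‖u‖ * ‖1 / u + b‖ := by
  have hu0 : u ≠ 0 := by
    intro h; rw [h] at hu; simp at hu; linarith
  have ht : γ ≤ ‖u‖ := le_trans hu (Complex.re_le_norm u)
  have htpos : 0 < ‖u‖ := by linarith
  have hre : (1 / u + b).re = u.re / Complex.normSq u + b.re := by
    simp [Complex.add_re, Complex.div_re, Complex.one_re, Complex.one_im]
  have hsq : Complex.normSq u = ‖u‖ ^ 2 := (Complex.sq_norm u).symm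
  have hle : (1 / u + b).re ≤ ‖1 / u + b‖ := Complex.re_le_norm _
  set t := ‖u‖ with htdef
  have h1 : γ / t + t * γ ≤ t * ‖1 / u + b‖ := by
    calc γ / t + t * γ ≤ u.re / t + t * b.re := by
          have : γ / t ≤ u.re / t := by
            apply div_le_div_of_nonneg_right hu htpos.le
          nlinarith
      _ = t * (u.re / Complex.normSq u + b.re) := by
          rw [hsq]; field_simp
      _ ≤ t * ‖1 / u + b‖ := by
          rw [← hre] at *
          exact mul_le_mul_of_nonneg_left hle (le_of_lt htpos)
  have h2 : γ ^ 2 + 1 ≤ γ / t + t * γ := by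
    rw [div_add' _ _ _ (ne_of_gt htpos), le_div_iff₀ htpos]
    nlinarith [mul_nonneg (sub_nonneg.mpr ht) (by nlinarith : (0:ℝ) ≤ γ * t - 1)]
  linarith


lemma diff_eq (b u v : ℂ) (hu : u ≠ 0) (hv : v ≠ 0)
    (hA : 1 / u + b ≠ 0) (hB : 1 / v + b ≠ 0) :
    1 / (1 / u + b) - 1 / (1 / v + b) = (u - v) / (u * v * (1 / u + b) * (1 / v + b)) := by
  have eA : (1 / u + b) * u = 1 + u * b := by field_simp
  have eB : (1 / v + b) * v = 1 + v * b := by field_simp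
  have hA' : 1 + u * b ≠ 0 := eA ▸ mul_ne_zero hA hu
  have hB' : 1 + v * b ≠ 0 := eB ▸ mul_ne_zero hB hv
  have r1 : 1 / (1 / u + b) = u / (1 + u * b) := by
    rw [div_eq_div_iff hA hA']; field_simp
  have r2 : 1 / (1 / v + b) = v / (1 + v * b) := by
    rw [div_eq_div_iff hB hB']; field_simp
  have rden : u * v * (1 / u + b) * (1 / v + b) = (1 + u * b) * (1 + v * b) := by
    field_simp
  rw [r1, r2, rden, div_sub_div _ _ hA' hB', div_eq_div_iff (mul_ne_zero hA' hB') (mul_ne_zero hA' hB')]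
  ring

/-- If `Re(b₁), Re(b₂) ≥ γ ≥ 1`, `ψⱼ(z) = 1/(z+bⱼ)`, `θ = ψ₁ ∘ ψ₂`, then for
`Re z, Re w ≥ 0` we have `|θ(z) − θ(w)| ≤ (γ²+1)⁻² |z−w|`. -/
theorem stmt_4 (γ : ℝ) (hγ : 1 ≤ γ) (b₁ b₂ : ℂ)
    (h1 : γ ≤ b₁.re) (h2 : γ ≤ b₂.re)
    (z w : ℂ) (hz : 0 ≤ z.re) (hw : 0 ≤ w.re) :
    ‖(1 / (1 / (z + b₂) + b₁)) - (1 / (1 / (w + b₂) + b₁))‖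
      ≤ ((γ ^ 2 + 1) ^ 2)⁻¹ * ‖z - w‖ := by
  set u := z + b₂ with hudef
  set v := w + b₂ with hvdef
  have hu : γ ≤ u.re := by simp [hudef, Complex.add_re]; linarith
  have hv : γ ≤ v.re := by simp [hvdef, Complex.add_re]; linarith
  have hKu := key_aux γ hγ b₁ u h1 hu
  have hKv := key_aux γ hγ b₁ v h1 hv
  have hγpos : (0:ℝ) < γ ^ 2 + 1 := by nlinarith
  have hu0 : u ≠ 0 := by intro h; rw [h] at hu; simp at hu; linarith
  have hv0 : v ≠ 0 := by intro h; rw [h] at hv; simp at hv; linarith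
  have hA0 : 1 / u + b₁ ≠ 0 := by
    intro h
    rw [h] at hKu; simp at hKu; nlinarith
  have hB0 : 1 / v + b₁ ≠ 0 := by
    intro h
    rw [h] at hKv; simp at hKv; nlinarith
  have hzw : z - w = u - v := by rw [hudef, hvdef]; ring
  have heq : 1 / (1 / u + b₁) - 1 / (1 / v + b₁)
      = (z - w) / (u * v * (1 / u + b₁) * (1 / v + b₁)) := by
    rw [hzw]; exact diff_eq b₁ u v hu0 hv0 hA0 hB0
  have hposu : 0 < ‖u‖ := norm_pos_iff.mpr hu0
  have hposv : 0 < ‖v‖ := norm_pos_iff.mpr hv0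
  have hposA : 0 < ‖1 / u + b₁‖ := norm_pos_iff.mpr hA0
  have hposB : 0 < ‖1 / v + b₁‖ := norm_pos_iff.mpr hB0
  rw [heq, norm_div]
  rw [norm_mul, norm_mul, norm_mul]
  have hden : (γ ^ 2 + 1) ^ 2 ≤
      ‖u‖ * ‖v‖ * ‖1 / u + b₁‖ * ‖1 / v + b₁‖ := by
    have h := mul_le_mul hKu hKv (by positivity) (by positivity)
    nlinarith
  rw [div_le_iff₀ (by nlinarith : (0:ℝ) < ‖u‖ * ‖v‖ * ‖1 / u + b₁‖ * ‖1 / v + b₁‖)]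
  rw [inv_mul_eq_div, div_mul_eq_mul_div, le_div_iff₀ (by nlinarith)]
  have habs : 0 ≤ ‖z - w‖ := norm_nonneg _
  nlinarith [mul_le_mul_of_nonneg_left hden habs]
end

section
/- Let (b_j)_{j≥1} be complex numbers with Re(b_j) ≥ γ > 0 for all j. Define B₀ = 1, B₁ = b₁, and B_{n+1} = B_{n−1} + b_{n+1} B_n for n ≥ 1. Then B_n ≠ 0 and Re(B_n / B_{n−1}) ≥ γ for all n ≥ 1. -/
/-- If `Re(b_j) ≥ γ > 0` and `B₀ = 1`, `B₁ = b₁`, `B_{n+1} = B_{n−1} + b_{n+1} B_n`,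
then `B_n ≠ 0` and `Re(B_n / B_{n−1}) ≥ γ` for all `n ≥ 1`. -/
theorem stmt_6 (γ : ℝ) (hγ : 0 < γ) (b : ℕ → ℂ) (hb : ∀ j, 1 ≤ j → γ ≤ (b j).re)
    (B : ℕ → ℂ) (hB0 : B 0 = 1) (hB1 : B 1 = b 1)
    (hBrec : ∀ n, 1 ≤ n → B (n + 1) = B (n - 1) + b (n + 1) * B n) :
    ∀ n, 1 ≤ n → B n ≠ 0 ∧ γ ≤ (B n / B (n - 1)).re := by
  intro n
  induction n with
  | zero => intro h; omega
  | succ m ih =>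
    intro _
    by_cases hm : m = 0
    · subst hm
      have h1 : γ ≤ (b 1).re := hb 1 le_rfl
      refine ⟨?_, ?_⟩
      · rw [hB1]
        intro h
        rw [h] at h1
        simp at h1
        linarith
      · simpa [hB1, hB0] using h1
    · have hm1 : 1 ≤ m := Nat.one_le_iff_ne_zero.mpr hm
      obtain ⟨hne, hre⟩ := ih hm1
      set w : ℂ := B m / B (m - 1) with hw
      have hwre : 0 < w.re := lt_of_lt_of_le hγ hre
      have hwne : w ≠ 0 := by
        intro h; rw [h] at hwre; simp at hwre
      have hnsq : 0 < Complex.normSq w := Complex.normSq_pos.mpr hwne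
      have hinv : 0 ≤ (w⁻¹).re := by
        rw [Complex.inv_re]
        positivity
      have key : B (m + 1) / B m = w⁻¹ + b (m + 1) := by
        rw [hBrec m hm1, hw, inv_div, add_div, mul_div_assoc,
          div_self hne, mul_one]
      have hre2 : γ ≤ (B (m + 1) / B m).re := by
        rw [key, Complex.add_re]
        have := hb (m + 1) (by omega)
        linarith
      have hne2 : B (m + 1) ≠ 0 := by
        intro h
        rw [h, zero_div] at hre2
        simp at hre2
        linarith
      exact ⟨hne2, by simpa using hre2⟩
end

section
/- Let γ > 0, s > 0, u ≥ γ, and v ∈ ℝ. With G(u,v;s) = (u²+v²)^{−s}, the second pure u-derivative satisfies −s/(4γ²(s+1)) · G(u,v;s) ≤ ∂_u² G(u,v;s) ≤ (2s(2s+1)/γ²) · G(u,v;s). -/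
lemma aux_deriv2 (s v u : ℝ) (h : 0 < u ^ 2 + v ^ 2) :
    deriv^[2] (fun u' : ℝ => (u' ^ 2 + v ^ 2) ^ (-s)) u
      = 2 * s * ((2 * s + 1) * u ^ 2 - v ^ 2) * (u ^ 2 + v ^ 2) ^ (-s - 2) := by
  set f : ℝ → ℝ := fun u' => (u' ^ 2 + v ^ 2) ^ (-s) with hf
  set g : ℝ → ℝ := fun x => (-(2 * s) * x) * (x ^ 2 + v ^ 2) ^ (-s - 1) with hg
  have hopen : IsOpen {x : ℝ | 0 < x ^ 2 + v ^ 2} :=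
    isOpen_lt continuous_const (by continuity)
  have hev : ∀ᶠ x in nhds u, 0 < x ^ 2 + v ^ 2 :=
    hopen.mem_nhds (by exact h)
  have hd1 : ∀ x : ℝ, 0 < x ^ 2 + v ^ 2 →
      HasDerivAt f ((2 * x ^ 1) * (-s) * (x ^ 2 + v ^ 2) ^ (-s - 1)) x := by
    intro x hx
    have := ((hasDerivAt_pow 2 x).add_const (v ^ 2)).rpow_const (p := -s) (Or.inl hx.ne')
    simpa using this
  have heq : deriv f =ᶠ[nhds u] g := by
    filter_upwards [hev] with x hx
    rw [(hd1 x hx).deriv]; simp only [hg, pow_one]; ring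
  have hD : HasDerivAt g
      (-(2 * s) * (u ^ 2 + v ^ 2) ^ (-s - 1)
        + (-(2 * s) * u) * ((2 * u ^ 1) * (-s - 1) * (u ^ 2 + v ^ 2) ^ (-s - 1 - 1))) u := by
    have hc : HasDerivAt (fun x : ℝ => -(2 * s) * x) (-(2 * s)) u :=
      by simpa using (hasDerivAt_id u).const_mul (-(2 * s))
    have hr : HasDerivAt (fun x : ℝ => (x ^ 2 + v ^ 2) ^ (-s - 1))
        ((2 * u ^ 1) * (-s - 1) * (u ^ 2 + v ^ 2) ^ (-s - 1 - 1)) u := by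
      have := ((hasDerivAt_pow 2 u).add_const (v ^ 2)).rpow_const (p := -s - 1) (Or.inl h.ne')
      simpa using this
    exact hc.mul hr
  have h2 : deriv^[2] f u = deriv (deriv f) u := by
    simp [Function.iterate_succ, Function.iterate_zero]
  rw [h2, heq.deriv_eq, hD.deriv]
  have hpow : (u ^ 2 + v ^ 2) ^ (-s - 1) = (u ^ 2 + v ^ 2) ^ (-s - 2) * (u ^ 2 + v ^ 2) := by
    rw [show (-s - 1) = (-s - 2) + 1 by ring, Real.rpow_add h, Real.rpow_one]
  have hpow2 : (-s - 1 - 1) = -s - 2 := by ring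
  rw [hpow2, hpow]; ring

/-- For `u ≥ γ > 0`, `s > 0`, `G(u,v;s) = (u²+v²)^{−s}`:
`−s/(4γ²(s+1))·G ≤ ∂_u²G ≤ 2s(2s+1)/γ²·G`. -/
theorem stmt_13 (γ s u v : ℝ) (hγ : 0 < γ) (hs : 0 < s) (hu : γ ≤ u) :
    -(s / (4 * γ ^ 2 * (s + 1))) * (u ^ 2 + v ^ 2) ^ (-s)
        ≤ deriv^[2] (fun u' => (u' ^ 2 + v ^ 2) ^ (-s)) u
      ∧ deriv^[2] (fun u' => (u' ^ 2 + v ^ 2) ^ (-s)) u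
        ≤ (2 * s * (2 * s + 1) / γ ^ 2) * (u ^ 2 + v ^ 2) ^ (-s) := by
  have hu0 : 0 < u := lt_of_lt_of_le hγ hu
  have hr : 0 < u ^ 2 + v ^ 2 := by positivity
  rw [aux_deriv2 s v u hr]
  have hP : 0 < (u ^ 2 + v ^ 2) ^ (-s - 2) := Real.rpow_pos_of_pos hr _
  have hG : (u ^ 2 + v ^ 2) ^ (-s) = (u ^ 2 + v ^ 2) ^ (-s - 2) * (u ^ 2 + v ^ 2) ^ 2 := by
    rw [← Real.rpow_natCast (u ^ 2 + v ^ 2) 2, ← Real.rpow_add hr]; norm_num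
  rw [hG]
  have hg2 : γ ^ 2 ≤ u ^ 2 := by nlinarith
  constructor
  · rw [neg_mul, neg_le, div_mul_eq_mul_div, le_div_iff₀ (by positivity)]
    rcases le_or_gt (v ^ 2) ((2 * s + 1) * u ^ 2) with hcase | hcase
    · nlinarith [mul_pos hP hr, mul_nonneg (mul_nonneg hs.le hP.le)
        (mul_nonneg (sub_nonneg.2 hcase) (by positivity : (0:ℝ) ≤ 4 * γ ^ 2 * (s + 1))),
        mul_nonneg (mul_nonneg hs.le hP.le) (sq_nonneg (u ^ 2 + v ^ 2))]
    · nlinarith [mul_nonneg (mul_nonneg hs.le hP.le) (sq_nonneg (v ^ 2 - (4 * s + 3) * u ^ 2)),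
        mul_nonneg (mul_nonneg (mul_nonneg hs.le hP.le) (by linarith : (0:ℝ) ≤ s + 1))
          (mul_nonneg (sub_nonneg.2 hg2) (le_of_lt (sub_pos.2 hcase)))]
  · rw [div_mul_eq_mul_div, le_div_iff₀ (by positivity)]
    nlinarith [mul_nonneg (mul_nonneg hP.le hs.le) (sq_nonneg v),
      mul_nonneg (mul_nonneg (mul_nonneg hP.le hs.le) hs.le) (sq_nonneg v),
      mul_nonneg (mul_nonneg hP.le hs.le) (mul_nonneg (sq_nonneg v) (sub_nonneg.2 hg2)),
      mul_nonneg (mul_nonneg (mul_nonneg hP.le hs.le) hs.le) (mul_nonneg (sq_nonneg v) (sub_nonneg.2 hg2)),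
      mul_nonneg (mul_nonneg (mul_nonneg hP.le hs.le) hs.le) (mul_nonneg (sq_nonneg u) (sub_nonneg.2 hg2)),
      mul_nonneg (mul_nonneg hP.le hs.le) (mul_nonneg (sq_nonneg u) (sub_nonneg.2 hg2))]
end

section
/- Let γ > 0, s > 0, u ≥ γ, and v ∈ ℝ. With G(u,v;s) = (u²+v²)^{−s}, the fourth pure u-derivative satisfies −(2s(2s+2)·3(s+1)/γ⁴)·G(u,v;s) ≤ ∂_u⁴ G(u,v;s) ≤ (2s(2s+1)(2s+2)(2s+3)/γ⁴)·G(u,v;s). -/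
open Set Filter

private lemma aux_hb (v x : ℝ) : HasDerivAt (fun y : ℝ => y ^ 2 + v ^ 2) (2 * x) x := by
  simpa using (hasDerivAt_pow 2 x).add_const (v ^ 2)

private lemma aux_deriv4 (s v : ℝ) :
    ∀ x ∈ Set.Ioi (0:ℝ),
      deriv^[4] (fun u' => (u' ^ 2 + v ^ 2) ^ (-s)) x
        = 12*s*(s+1) * (x^2+v^2) ^ (-s-2)
          - 48*s*(s+1)*(s+2)*x^2 * (x^2+v^2) ^ (-s-3)
          + 16*s*(s+1)*(s+2)*(s+3)*x^4 * (x^2+v^2) ^ (-s-4) := by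
  set f0 : ℝ → ℝ := fun x => (x ^ 2 + v ^ 2) ^ (-s) with hf0
  set f1 : ℝ → ℝ := fun x => (-(2*s)*x) * (x^2+v^2) ^ (-s-1) with hf1
  set f2 : ℝ → ℝ := fun x => -(2*s) * (x^2+v^2)^(-s-1)
      + 4*s*(s+1)*x^2 * (x^2+v^2)^(-s-2) with hf2
  set f3 : ℝ → ℝ := fun x => 12*s*(s+1)*x * (x^2+v^2)^(-s-2)
      - 8*s*(s+1)*(s+2)*x^3 * (x^2+v^2)^(-s-3) with hf3
  set f4 : ℝ → ℝ := fun x => 12*s*(s+1) * (x^2+v^2)^(-s-2)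
      - 48*s*(s+1)*(s+2)*x^2 * (x^2+v^2)^(-s-3)
      + 16*s*(s+1)*(s+2)*(s+3)*x^4 * (x^2+v^2)^(-s-4) with hf4
  have hA : ∀ x : ℝ, x ∈ Set.Ioi (0:ℝ) → (x^2+v^2) ≠ 0 := by
    intro x hx
    have hx' : 0 < x := hx
    positivity
  have E1 : ∀ x ∈ Set.Ioi (0:ℝ), deriv f0 x = f1 x := by
    intro x hx
    have h := (aux_hb v x).rpow_const (p := -s) (Or.inl (hA x hx))
    have h' : HasDerivAt f0 (f1 x) x := by
      rw [hf0, hf1]; convert h using 1; ring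
    exact h'.deriv
  have E2 : ∀ x ∈ Set.Ioi (0:ℝ), deriv f1 x = f2 x := by
    intro x hx
    have hc : HasDerivAt (fun y : ℝ => -(2*s)*y) (-(2*s)) x := by
      simpa using (hasDerivAt_id x).const_mul (-(2*s))
    have hg := (aux_hb v x).rpow_const (p := -s-1) (Or.inl (hA x hx))
    have h := hc.mul hg
    have h' : HasDerivAt f1 (f2 x) x := by
      rw [hf1, hf2]
      convert h using 1
      rotate_right
      rw [show (-s - 1 - 1 : ℝ) = -s - 2 by ring]
      ring
      all_goals rfl
    exact h'.deriv
  have E3 : ∀ x ∈ Set.Ioi (0:ℝ), deriv f2 x = f3 x := by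
    intro x hx
    have hx2 : HasDerivAt (fun y : ℝ => 4*s*(s+1)*y^2) (4*s*(s+1)*(2*x)) x := by
      simpa using (hasDerivAt_pow 2 x).const_mul (4*s*(s+1))
    have hg1 := ((aux_hb v x).rpow_const (p := -s-1) (Or.inl (hA x hx))).const_mul (-(2*s))
    have hg2 := (aux_hb v x).rpow_const (p := -s-2) (Or.inl (hA x hx))
    have h := hg1.add (hx2.mul hg2)
    have h' : HasDerivAt f2 (f3 x) x := by
      rw [hf2, hf3]
      convert h using 1
      rotate_right
      rw [show (-s - 1 - 1 : ℝ) = -s - 2 by ring, show (-s - 2 - 1 : ℝ) = -s - 3 by ring]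
      ring
      all_goals rfl
    exact h'.deriv
  have E4 : ∀ x ∈ Set.Ioi (0:ℝ), deriv f3 x = f4 x := by
    intro x hx
    have hc1 : HasDerivAt (fun y : ℝ => 12*s*(s+1)*y) (12*s*(s+1)) x := by
      simpa using (hasDerivAt_id x).const_mul (12*s*(s+1))
    have hc2 : HasDerivAt (fun y : ℝ => 8*s*(s+1)*(s+2)*y^3) (8*s*(s+1)*(s+2)*(3*x^2)) x := by
      simpa using (hasDerivAt_pow 3 x).const_mul (8*s*(s+1)*(s+2))
    have hg2 := (aux_hb v x).rpow_const (p := -s-2) (Or.inl (hA x hx))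
    have hg3 := (aux_hb v x).rpow_const (p := -s-3) (Or.inl (hA x hx))
    have h := (hc1.mul hg2).sub (hc2.mul hg3)
    have h' : HasDerivAt f3 (f4 x) x := by
      rw [hf3, hf4]
      convert h using 1
      rotate_right
      rw [show (-s - 2 - 1 : ℝ) = -s - 3 by ring, show (-s - 3 - 1 : ℝ) = -s - 4 by ring]
      ring
      all_goals rfl
    exact h'.deriv
  have I2 : ∀ x ∈ Set.Ioi (0:ℝ), deriv (deriv f0) x = f2 x := by
    intro x hx
    have e : deriv f0 =ᶠ[nhds x] f1 :=
      eventuallyEq_of_mem (isOpen_Ioi.mem_nhds hx) E1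
    rw [e.deriv_eq]; exact E2 x hx
  have I3 : ∀ x ∈ Set.Ioi (0:ℝ), deriv (deriv (deriv f0)) x = f3 x := by
    intro x hx
    have e : deriv (deriv f0) =ᶠ[nhds x] f2 :=
      eventuallyEq_of_mem (isOpen_Ioi.mem_nhds hx) I2
    rw [e.deriv_eq]; exact E3 x hx
  have I4 : ∀ x ∈ Set.Ioi (0:ℝ), deriv (deriv (deriv (deriv f0))) x = f4 x := by
    intro x hx
    have e : deriv (deriv (deriv f0)) =ᶠ[nhds x] f3 :=
      eventuallyEq_of_mem (isOpen_Ioi.mem_nhds hx) I3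
    rw [e.deriv_eq]; exact E4 x hx
  intro x hx
  have : deriv^[4] f0 x = deriv (deriv (deriv (deriv f0))) x := rfl
  rw [this, I4 x hx, hf4]

set_option maxHeartbeats 1000000 in
/-- For `u ≥ γ > 0`, `s > 0`, `G(u,v;s) = (u²+v²)^{−s}`:
`−(2s(2s+2)·3(s+1)/γ⁴)·G ≤ ∂_u⁴G ≤ (2s(2s+1)(2s+2)(2s+3)/γ⁴)·G`. -/
theorem stmt_16 (γ s u v : ℝ) (hγ : 0 < γ) (hs : 0 < s) (hu : γ ≤ u) :
    -((2 * s * (2 * s + 2) * (3 * (s + 1))) / γ ^ 4) * (u ^ 2 + v ^ 2) ^ (-s)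
        ≤ deriv^[4] (fun u' => (u' ^ 2 + v ^ 2) ^ (-s)) u
      ∧ deriv^[4] (fun u' => (u' ^ 2 + v ^ 2) ^ (-s)) u
        ≤ ((2 * s * (2 * s + 1) * (2 * s + 2) * (2 * s + 3)) / γ ^ 4)
            * (u ^ 2 + v ^ 2) ^ (-s) := by
  have hu0 : 0 < u := hγ.trans_le hu
  have hA : (0:ℝ) < u ^ 2 + v ^ 2 := by positivity
  have hD := aux_deriv4 s v u (Set.mem_Ioi.mpr hu0)
  rw [hD]
  have e2 : (u^2+v^2) ^ (-s-2) = (u^2+v^2) ^ (-s-4) * (u^2+v^2)^2 := by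
    rw [show (-s-2:ℝ) = (-s-4) + 2 by ring, Real.rpow_add hA,
      show ((2:ℝ)) = ((2:ℕ):ℝ) by norm_num, Real.rpow_natCast]
  have e3 : (u^2+v^2) ^ (-s-3) = (u^2+v^2) ^ (-s-4) * (u^2+v^2) := by
    rw [show (-s-3:ℝ) = (-s-4) + 1 by ring, Real.rpow_add hA, Real.rpow_one]
  have e0 : (u^2+v^2) ^ (-s) = (u^2+v^2) ^ (-s-4) * (u^2+v^2)^4 := by
    have h := Real.rpow_add hA (-s-4) (4:ℝ)
    rw [show (-s-4) + (4:ℝ) = -s by ring,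
      show ((4:ℝ)) = ((4:ℕ):ℝ) by norm_num, Real.rpow_natCast] at h
    exact h
  rw [e2, e3, e0]
  set B := (u^2+v^2) ^ (-s-4) with hBdef
  set A := u^2+v^2 with hAdef
  have hB : 0 < B := Real.rpow_pos_of_pos hA _
  have hγ4 : (0:ℝ) < γ^4 := by positivity
  have hA2 : γ^2 ≤ A := by nlinarith [sq_nonneg v]
  have h4 : γ^4 ≤ A^2 := by nlinarith [sq_nonneg γ]
  -- polynomial bounds
  have hlowP : -(12*s*(s+1)^2) * A^2
      ≤ 12*s*(s+1)*A^2 - 48*s*(s+1)*(s+2)*u^2*A + 16*s*(s+1)*(s+2)*(s+3)*u^4 := by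
    have hid : (12*s*(s+1)*A^2 - 48*s*(s+1)*(s+2)*u^2*A + 16*s*(s+1)*(s+2)*(s+3)*u^4)
        + 12*s*(s+1)^2*A^2 = 4*s*(s+1)*(s+2)*(3*(u^2-v^2)^2 + 4*s*u^4) := by
      rw [hAdef]; ring
    have hpos : 0 ≤ 4*s*(s+1)*(s+2)*(3*(u^2-v^2)^2 + 4*s*u^4) := by positivity
    linarith
  have hupP : 12*s*(s+1)*A^2 - 48*s*(s+1)*(s+2)*u^2*A + 16*s*(s+1)*(s+2)*(s+3)*u^4
      ≤ (2*s*(2*s+1)*(2*s+2)*(2*s+3)) * A^2 := by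
    have hid : (2*s*(2*s+1)*(2*s+2)*(2*s+3)) * A^2
        - (12*s*(s+1)*A^2 - 48*s*(s+1)*(s+2)*u^2*A + 16*s*(s+1)*(s+2)*(s+3)*u^4)
        = 4*s*(s+1)*((2*(2*s+1)*(2*s+3)+6*(2*s+3))*u^2*v^2 + 4*s*(s+2)*v^4) := by
      rw [hAdef]; ring
    have hpos : 0 ≤ 4*s*(s+1)*((2*(2*s+1)*(2*s+3)+6*(2*s+3))*u^2*v^2 + 4*s*(s+2)*v^4) := by
      positivity
    linarith
  have hlow : -((2 * s * (2 * s + 2) * (3 * (s + 1))) / γ ^ 4) * A^4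
      ≤ 12*s*(s+1)*A^2 - 48*s*(s+1)*(s+2)*u^2*A + 16*s*(s+1)*(s+2)*(s+3)*u^4 := by
    rw [neg_mul, neg_le, div_mul_eq_mul_div, le_div_iff₀ hγ4]
    nlinarith [mul_le_mul_of_nonneg_right hlowP hγ4.le,
      mul_le_mul_of_nonneg_left h4 (by positivity : (0:ℝ) ≤ 12*s*(s+1)^2*A^2)]
  have hup : 12*s*(s+1)*A^2 - 48*s*(s+1)*(s+2)*u^2*A + 16*s*(s+1)*(s+2)*(s+3)*u^4
      ≤ (2 * s * (2 * s + 1) * (2 * s + 2) * (2 * s + 3)) / γ ^ 4 * A^4 := by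
    rw [div_mul_eq_mul_div, le_div_iff₀ hγ4]
    nlinarith [mul_le_mul_of_nonneg_right hupP hγ4.le,
      mul_le_mul_of_nonneg_left h4
        (by positivity : (0:ℝ) ≤ 2*s*(2*s+1)*(2*s+2)*(2*s+3)*A^2)]
  constructor
  · calc -((2 * s * (2 * s + 2) * (3 * (s + 1))) / γ ^ 4) * (B * A^4)
        = B * (-((2 * s * (2 * s + 2) * (3 * (s + 1))) / γ ^ 4) * A^4) := by ring
      _ ≤ B * (12*s*(s+1)*A^2 - 48*s*(s+1)*(s+2)*u^2*A + 16*s*(s+1)*(s+2)*(s+3)*u^4) :=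
          mul_le_mul_of_nonneg_left hlow hB.le
      _ = 12*s*(s+1) * (B * A^2) - 48*s*(s+1)*(s+2)*u^2 * (B * A)
          + 16*s*(s+1)*(s+2)*(s+3)*u^4 * B := by ring
  · calc 12*s*(s+1) * (B * A^2) - 48*s*(s+1)*(s+2)*u^2 * (B * A)
          + 16*s*(s+1)*(s+2)*(s+3)*u^4 * B
        = B * (12*s*(s+1)*A^2 - 48*s*(s+1)*(s+2)*u^2*A + 16*s*(s+1)*(s+2)*(s+3)*u^4) := by
          ring
      _ ≤ B * ((2 * s * (2 * s + 1) * (2 * s + 2) * (2 * s + 3)) / γ ^ 4 * A^4) :=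
          mul_le_mul_of_nonneg_left hup hB.le
      _ = (2 * s * (2 * s + 1) * (2 * s + 2) * (2 * s + 3)) / γ ^ 4 * (B * A^4) := by ring
end
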